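/- Let X be a Banach space, C, D ∈ L(X) bounded linear operators such that I − C is invertible and both D² and DC are compact. Then I − C − D is a Fredholm operator of index zero. -/

import Mathlib

/-- A bounded operator `F` on a Banach space is Fredholm of index zero:
finite-dimensional kernel, closed range, finite-dimensional cokernel, and
the dimensions of kernel and cokernel agree. -/
def FredholmIndexZero {X : Type*} [NormedAddCommGroup X] [NormedSpace ℝ X]
    (F : X →L[ℝ] X) : Prop :=
  FiniteDimensional ℝ (LinearMap.ker (F : X →ₗ[ℝ] X)) ∧
  IsClosed (LinearMap.range (F : X →ₗ[ℝ] X) : Set X) ∧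
  FiniteDimensional ℝ (X ⧸ LinearMap.range (F : X →ₗ[ℝ] X)) ∧
  Module.finrank ℝ (LinearMap.ker (F : X →ₗ[ℝ] X)) = Module.finrank ℝ (X ⧸ LinearMap.range (F : X →ₗ[ℝ] X))

section RieszTheory

open Module Metric Set Filter

variable {X : Type*} [NormedAddCommGroup X] [NormedSpace ℝ X]


/-- Normalized Riesz lemma between nested submodules. -/
lemma riesz_between (F G : Submodule ℝ X) (hle : F ≤ G) (hF : IsClosed (F : Set X))
    (hne : ∃ x ∈ G, x ∉ F) :
    ∃ x, x ∈ G ∧ ‖x‖ = 1 ∧ ∀ y ∈ F, (1:ℝ)/2 ≤ ‖x - y‖ := by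
  obtain ⟨x, hxG, hxF⟩ := hne
  have hFne : (F : Set X).Nonempty := ⟨0, F.zero_mem⟩
  have hd : 0 < infDist x (F : Set X) := (hF.notMem_iff_infDist_pos hFne).1 hxF
  obtain ⟨y, hyF, hxy⟩ := (Metric.infDist_lt_iff hFne).1
    (show infDist x (F : Set X) < (3/2) * infDist x (F : Set X) by linarith)
  have hxyne : x - y ≠ 0 := by
    intro h
    exact hxF (by simpa [sub_eq_zero.1 h] using hyF)
  have hnorm : 0 < ‖x - y‖ := norm_pos_iff.2 hxyne
  refine ⟨‖x - y‖⁻¹ • (x - y), G.smul_mem _ (G.sub_mem hxG (hle hyF)), ?_, ?_⟩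
  · simp [norm_smul, abs_of_nonneg (le_of_lt (inv_pos.2 hnorm)), inv_mul_cancel₀ (ne_of_gt hnorm)]
  · intro z hzF
    have hz' : y + ‖x - y‖ • z ∈ F := F.add_mem hyF (F.smul_mem _ hzF)
    have hkey : infDist x (F : Set X) ≤ ‖x - (y + ‖x - y‖ • z)‖ := by
      simpa [dist_eq_norm] using Metric.infDist_le_dist_of_mem hz'
    have heq : ‖x - y‖⁻¹ • (x - y) - z = ‖x - y‖⁻¹ • (x - (y + ‖x - y‖ • z)) := by
      rw [smul_sub, smul_sub, smul_add, smul_smul, inv_mul_cancel₀ (ne_of_gt hnorm), one_smul]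
      abel
    rw [heq, norm_smul, norm_inv, norm_norm]
    rw [dist_eq_norm] at hxy
    have h1 : infDist x (F : Set X) / ‖x - y‖ ≤ ‖x - y‖⁻¹ * ‖x - (y + ‖x - y‖ • z)‖ := by
      rw [div_eq_inv_mul]
      exact mul_le_mul_of_nonneg_left hkey (le_of_lt (inv_pos.2 hnorm))
    refine le_trans ?_ h1
    rw [le_div_iff₀ hnorm]
    nlinarith [hxy, hd]

/-- A compact operator cannot separate a bounded sequence. -/
lemma no_separated_seq (B : X →L[ℝ] X) (hB : IsCompactOperator ⇑B)
    (x : ℕ → X) (hx : ∀ n, ‖x n‖ ≤ 1)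
    (hsep : ∀ m n, m < n → (1:ℝ)/2 ≤ ‖B (x n) - B (x m)‖) : False := by
  obtain ⟨K, hK, hKsub⟩ := hB.image_closedBall_subset_compact 1
  have hmem : ∀ n, B (x n) ∈ K := fun n =>
    hKsub ⟨x n, by simpa [Metric.mem_closedBall, dist_eq_norm] using hx n, rfl⟩
  obtain ⟨a, _, φ, hφ, hconv⟩ := hK.tendsto_subseq hmem
  have hc : CauchySeq ((fun n => B (x n)) ∘ φ) := hconv.cauchySeq
  obtain ⟨N, hN⟩ := Metric.cauchySeq_iff'.1 hc (1/2) (by norm_num)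
  have h1 := hN (N + 1) (Nat.le_succ N)
  have h2 := hsep (φ N) (φ (N + 1)) (hφ (Nat.lt_succ_self N))
  rw [dist_eq_norm] at h1
  simp only [Function.comp_apply] at h1
  linarith

/-- If a compact operator is the identity on the kernel of `S`, that kernel
is finite dimensional. -/
lemma finiteDimensional_ker_of_compact (S B : X →L[ℝ] X) (hB : IsCompactOperator ⇑B)
    (h : ∀ x ∈ LinearMap.ker (S : X →ₗ[ℝ] X), B x = x) : FiniteDimensional ℝ (LinearMap.ker (S : X →ₗ[ℝ] X)) := by
  set V : Submodule ℝ X := LinearMap.ker (S : X →ₗ[ℝ] X) with hV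
  have hVclosed : IsClosed (V : Set X) := ContinuousLinearMap.isClosed_ker S
  obtain ⟨K, hK, hKsub⟩ := hB.image_closedBall_subset_compact 1
  -- the closed unit ball of V, seen in X
  set s' : Set X := (V : Set X) ∩ Metric.closedBall 0 1 with hs'
  have hs'sub : s' ⊆ K := by
    intro x hx
    have hmem : B x ∈ ⇑B '' Metric.closedBall 0 1 := ⟨x, hx.2, rfl⟩
    have := hKsub hmem
    rwa [h x hx.1] at this
  have hs'compact : IsCompact s' :=
    hK.of_isClosed_subset (hVclosed.inter Metric.isClosed_closedBall) hs'sub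
  have hcomp : IsCompact (Metric.closedBall (0 : V) 1) := by
    rw [Topology.IsEmbedding.isCompact_iff (Topology.IsEmbedding.subtypeVal)]
    convert hs'compact using 1
    ext x
    constructor
    · rintro ⟨⟨y, hy⟩, hball, rfl⟩
      refine ⟨hy, ?_⟩
      simpa [Metric.mem_closedBall, dist_eq_norm] using
        (by simpa [Metric.mem_closedBall, dist_eq_norm] using hball : ‖(⟨y, hy⟩ : V)‖ ≤ 1)
    · rintro ⟨hxV, hball⟩
      exact ⟨⟨x, hxV⟩, by simpa [Metric.mem_closedBall, dist_eq_norm] using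
        (by simpa [Metric.mem_closedBall, dist_eq_norm] using hball : ‖x‖ ≤ 1), rfl⟩
  exact FiniteDimensional.of_isCompact_closedBall₀ ℝ one_pos hcomp

variable [CompleteSpace X]

/-- If `1 - G = R * S` with `G` compact, then `S` has closed range. -/
lemma isClosed_range_of_compact_factor (S G R : X →L[ℝ] X) (hG : IsCompactOperator ⇑G)
    (hfac : (1 : X →L[ℝ] X) - G = R * S) : IsClosed (LinearMap.range (S : X →ₗ[ℝ] X) : Set X) := by
  have hfac' : ∀ x : X, x - G x = R (S x) := by
    intro x
    have := congrArg (fun T : X →L[ℝ] X => T x) hfac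
    simpa using this
  have hGfix : ∀ x ∈ LinearMap.ker (S : X →ₗ[ℝ] X), G x = x := by
    intro x hx
    have h := hfac' x
    rw [(show S x = 0 from LinearMap.mem_ker.1 hx), map_zero, sub_eq_zero] at h
    exact h.symm
  haveI : FiniteDimensional ℝ (LinearMap.ker (S : X →ₗ[ℝ] X)) :=
    finiteDimensional_ker_of_compact S G hG hGfix
  obtain ⟨q, hqclosed, hcompl⟩ :=
    (Submodule.ClosedComplemented.of_finiteDimensional (LinearMap.ker (S : X →ₗ[ℝ] X))).exists_isClosed_isCompl
  -- `S` is bounded below on `q`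
  have hbdd : ∃ c : ℝ, 0 < c ∧ ∀ x ∈ q, ‖x‖ ≤ c * ‖S x‖ := by
    by_contra hcon
    push_neg at hcon
    choose xf hxq hxlt using fun n : ℕ => hcon ((n : ℝ) + 1) (by positivity)
    have hxne : ∀ n, (0:ℝ) < ‖xf n‖ := by
      intro n
      rcases (norm_nonneg (xf n)).lt_or_eq with h | h
      · exact h
      · exfalso
        have := hxlt n
        nlinarith [norm_nonneg (S (xf n)), this, h.symm]
    set u : ℕ → X := fun n => ‖xf n‖⁻¹ • xf n with hu
    have hunorm : ∀ n, ‖u n‖ = 1 := by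
      intro n
      simp only [hu, norm_smul, norm_inv, norm_norm]
      exact inv_mul_cancel₀ (ne_of_gt (hxne n))
    have huq : ∀ n, u n ∈ q := fun n => q.smul_mem _ (hxq n)
    have hSu : Filter.Tendsto (fun n => S (u n)) Filter.atTop (nhds 0) := by
      refine squeeze_zero_norm (fun n => ?_) tendsto_one_div_add_atTop_nhds_zero_nat
      have hn1 : (0:ℝ) < (n:ℝ) + 1 := by positivity
      have h2 : ((n:ℝ)+1) * ‖S (xf n)‖ < ‖xf n‖ := hxlt n
      simp only [hu, map_smul, norm_smul, norm_inv, norm_norm]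
      rw [inv_mul_le_iff₀ (hxne n), mul_one_div, le_div_iff₀ hn1]
      nlinarith
    obtain ⟨K, hK, hKsub⟩ := hG.image_closedBall_subset_compact 1
    have hmem : ∀ n, G (u n) ∈ K := fun n =>
      hKsub ⟨u n, by simp [Metric.mem_closedBall, dist_eq_norm, hunorm n], rfl⟩
    obtain ⟨a, _, φ, hφ, hGconv⟩ := hK.tendsto_subseq hmem
    have h4 : Filter.Tendsto (fun n => u (φ n) - G (u (φ n))) Filter.atTop (nhds 0) := by
      have : (fun n => u (φ n) - G (u (φ n))) = fun n => R (S (u (φ n))) := by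
        funext n; exact hfac' (u (φ n))
      rw [this]
      have h5 : Filter.Tendsto (fun n => S (u (φ n))) Filter.atTop (nhds 0) :=
        hSu.comp hφ.tendsto_atTop
      have := (R.continuous.tendsto 0).comp h5
      simpa [Function.comp_def] using this
    have huconv : Filter.Tendsto (u ∘ φ) Filter.atTop (nhds a) := by
      have := h4.add hGconv
      simp only [zero_add] at this
      convert this using 2 with n
      simp [Function.comp]
    have haq : a ∈ q := hqclosed.mem_of_tendsto huconv (Filter.Eventually.of_forall
      fun n => huq (φ n))
    have hanorm : ‖a‖ = 1 := by
      have h6 : Filter.Tendsto (fun n => ‖u (φ n)‖) Filter.atTop (nhds ‖a‖) :=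
        (continuous_norm.tendsto a).comp huconv
      have h7 : Filter.Tendsto (fun n : ℕ => (1:ℝ)) Filter.atTop (nhds 1) := tendsto_const_nhds
      have : (fun n => ‖u (φ n)‖) = fun _ : ℕ => (1:ℝ) := funext fun n => hunorm (φ n)
      rw [this] at h6
      exact tendsto_nhds_unique h6 h7
    have haker : a ∈ LinearMap.ker (S : X →ₗ[ℝ] X) := by
      have h8 : Filter.Tendsto (fun n => S (u (φ n))) Filter.atTop (nhds (S a)) :=
        (S.continuous.tendsto a).comp huconv
      have h9 : Filter.Tendsto (fun n => S (u (φ n))) Filter.atTop (nhds 0) :=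
        hSu.comp hφ.tendsto_atTop
      exact LinearMap.mem_ker.2 (tendsto_nhds_unique h8 h9)
    have : a ∈ (⊥ : Submodule ℝ X) := by
      rw [← hcompl.inf_eq_bot]
      exact ⟨haker, haq⟩
    rw [Submodule.mem_bot] at this
    rw [this, norm_zero] at hanorm
    norm_num at hanorm
  obtain ⟨c, hc, hcb⟩ := hbdd
  -- the restriction of `S` to `q` is antilipschitz with closed range
  set f : q →L[ℝ] X := S.comp q.subtypeL with hf
  have hanti : AntilipschitzWith c.toNNReal ⇑f := by
    apply AddMonoidHomClass.antilipschitz_of_bound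
    intro v
    have := hcb (v : X) v.2
    rwa [Real.coe_toNNReal c hc.le]
  haveI : CompleteSpace q := hqclosed.completeSpace_coe
  have hcl : IsClosed (Set.range ⇑f) := hanti.isClosed_range f.uniformContinuous
  have heq : Set.range ⇑f = (LinearMap.range (S : X →ₗ[ℝ] X) : Set X) := by
    ext y
    constructor
    · rintro ⟨v, rfl⟩
      exact ⟨(v : X), rfl⟩
    · rintro ⟨x, rfl⟩
      have hx : x ∈ LinearMap.ker (S : X →ₗ[ℝ] X) ⊔ q := by
        rw [hcompl.sup_eq_top]; trivial
      obtain ⟨k, hk, v, hv, hkv⟩ := Submodule.mem_sup.1 hx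
      refine ⟨⟨v, hv⟩, ?_⟩
      have : S x = S k + S v := by rw [← hkv, map_add]
      simp only [hf, ContinuousLinearMap.comp_apply, Submodule.subtypeL_apply, ContinuousLinearMap.coe_coe]
      rw [this, (show S k = 0 from LinearMap.mem_ker.1 hk), zero_add]
  rw [← heq]
  exact hcl

/-- Semi-Fredholm properties for `S` with `(1-S)²` compact. -/
lemma semiFredholm (S : X →L[ℝ] X) (h : IsCompactOperator ⇑((1 - S) * (1 - S))) :
    FiniteDimensional ℝ (LinearMap.ker (S : X →ₗ[ℝ] X)) ∧ IsClosed ((LinearMap.range (S : X →ₗ[ℝ] X) : Submodule ℝ X) : Set X) := by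
  constructor
  · apply finiteDimensional_ker_of_compact S _ h
    intro x hx
    have hx0 : S x = 0 := LinearMap.mem_ker.1 hx
    simp [ContinuousLinearMap.mul_apply, ContinuousLinearMap.sub_apply,
      ContinuousLinearMap.one_apply, hx0, map_sub]
  · exact isClosed_range_of_compact_factor S _ (1 + (1 - S)) h (by noncomm_ring)

lemma powQ_compact (A : X →L[ℝ] X) (hK : IsCompactOperator ⇑((1 - A) * (1 - A))) (k : ℕ) :
    IsCompactOperator ⇑((1 - A ^ k) * (1 - A ^ k)) := by
  have h1 : (1 : X →L[ℝ] X) - A ^ k = (∑ i ∈ Finset.range k, A ^ i) * (1 - A) := by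
    have hg := geom_sum_mul A k
    have h2 : (∑ i ∈ Finset.range k, A ^ i) * (1 - A)
        = -((∑ i ∈ Finset.range k, A ^ i) * (A - 1)) := by noncomm_ring
    rw [h2, hg]; noncomm_ring
  have h1' : (1 : X →L[ℝ] X) - A ^ k = (1 - A) * (∑ i ∈ Finset.range k, A ^ i) := by
    have hg := mul_geom_sum A k
    have h2 : (1 - A) * (∑ i ∈ Finset.range k, A ^ i)
        = -((A - 1) * (∑ i ∈ Finset.range k, A ^ i)) := by noncomm_ring
    rw [h2, hg]; noncomm_ring
  have key : (1 - A ^ k) * (1 - A ^ k) = (∑ i ∈ Finset.range k, A ^ i) *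
      (((1 - A) * (1 - A)) * (∑ i ∈ Finset.range k, A ^ i)) := by
    calc (1 - A ^ k) * (1 - A ^ k)
        = ((∑ i ∈ Finset.range k, A ^ i) * (1 - A)) * ((1 - A) * (∑ i ∈ Finset.range k, A ^ i)) := by
          rw [← h1, ← h1']
      _ = (∑ i ∈ Finset.range k, A ^ i) * (((1 - A) * (1 - A)) * (∑ i ∈ Finset.range k, A ^ i)) := by
          noncomm_ring
  rw [key]
  have hco : ⇑((∑ i ∈ Finset.range k, A ^ i) * (((1 - A) * (1 - A)) * (∑ i ∈ Finset.range k, A ^ i)))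
      = ⇑(∑ i ∈ Finset.range k, A ^ i) ∘ (⇑((1 - A) * (1 - A)) ∘ ⇑(∑ i ∈ Finset.range k, A ^ i)) := rfl
  rw [hco]
  exact (hK.comp_clm _).clm_comp _

lemma comm_maps_ker (P S : X →L[ℝ] X) (h : S * P = P * S) :
    ∀ x ∈ LinearMap.ker (S : X →ₗ[ℝ] X), P x ∈ LinearMap.ker (S : X →ₗ[ℝ] X) := by
  intro x hx
  have hc : S (P x) = P (S x) := by
    have := congrArg (fun T : X →L[ℝ] X => T x) h
    simpa using this
  rw [LinearMap.mem_ker, ContinuousLinearMap.coe_coe, hc, (show S x = 0 from LinearMap.mem_ker.1 hx), map_zero]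

lemma comm_maps_range (P S : X →L[ℝ] X) (h : S * P = P * S) :
    ∀ x ∈ LinearMap.range (S : X →ₗ[ℝ] X), P x ∈ LinearMap.range (S : X →ₗ[ℝ] X) := by
  rintro x ⟨z, rfl⟩
  refine ⟨P z, ?_⟩
  have := congrArg (fun T : X →L[ℝ] X => T z) h
  simpa using this

theorem fredholmIndexZero'_of_sq_compact (A : X →L[ℝ] X)
    (hK : IsCompactOperator ⇑((1 - A) * (1 - A))) : FredholmIndexZero A := by
  set K : X →L[ℝ] X := 1 - A with hKdef
  -- basic commutation facts
  have hAK : Commute A K := (Commute.one_right A).sub_right (Commute.refl A)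
  have hcomm : ∀ (k : ℕ) (P : X →L[ℝ] X), Commute A P → A ^ k * P = P * A ^ k :=
    fun k P h => (h.pow_left k).eq
  have hAKK : Commute A (K * K) := hAK.mul_right hAK
  have hA1K : Commute A (1 + K) := (Commute.one_right A).add_right hAK
  -- kernels and ranges of powers
  set Nk : ℕ → Submodule ℝ X := fun k => LinearMap.ker (((A ^ k) : X →L[ℝ] X) : X →ₗ[ℝ] X) with hNk
  set Rk : ℕ → Submodule ℝ X := fun k => LinearMap.range (((A ^ k) : X →L[ℝ] X) : X →ₗ[ℝ] X) with hRk
  have hsemi : ∀ k, FiniteDimensional ℝ (Nk k) ∧ IsClosed ((Rk k : Submodule ℝ X) : Set X) :=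
    fun k => semiFredholm (A ^ k) (powQ_compact A hK k)
  have hNclosed : ∀ k, IsClosed ((Nk k : Submodule ℝ X) : Set X) :=
    fun k => ContinuousLinearMap.isClosed_ker (A ^ k)
  have hNmono : ∀ k, Nk k ≤ Nk (k + 1) := by
    intro k x hx
    have : A ^ (k + 1) = A * A ^ k := pow_succ' A k
    simp only [hNk, LinearMap.mem_ker, ContinuousLinearMap.coe_coe] at hx ⊢
    rw [this, ContinuousLinearMap.mul_apply, hx, map_zero]
  have hNle : ∀ i j, i ≤ j → Nk i ≤ Nk j := by
    intro i j hij
    induction j with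
    | zero => simp_all
    | succ j ih =>
      rcases Nat.lt_or_ge i (j+1) with h | h
      · exact le_trans (ih (Nat.lt_succ_iff.1 h)) (hNmono j)
      · have : i = j + 1 := le_antisymm hij h
        rw [this]
  have hRanti : ∀ k, Rk (k + 1) ≤ Rk k := by
    rintro k x ⟨z, rfl⟩
    have h : A ^ (k + 1) = A ^ k * A := pow_succ A k
    exact ⟨A z, by rw [h]; rfl⟩
  have hRle : ∀ i j, i ≤ j → Rk j ≤ Rk i := by
    intro i j hij
    induction j with
    | zero => simp_all
    | succ j ih =>
      rcases Nat.lt_or_ge i (j+1) with h | h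
      · exact le_trans (hRanti j) (ih (Nat.lt_succ_iff.1 h))
      · have : i = j + 1 := le_antisymm hij h
        rw [this]
  -- invariance of kernels and ranges under operators commuting with A
  have hkerinv : ∀ (k : ℕ) (P : X →L[ℝ] X), Commute A P → ∀ x ∈ Nk k, P x ∈ Nk k :=
    fun k P h => comm_maps_ker P (A ^ k) (hcomm k P h)
  have hrangeinv : ∀ (k : ℕ) (P : X →L[ℝ] X), Commute A P → ∀ x ∈ Rk k, P x ∈ Rk k :=
    fun k P h => comm_maps_range P (A ^ k) (hcomm k P h)
  -- pointwise identity : x - K²x = (1+K)(A x)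
  have hid : ∀ x : X, x - (K * K) x = (1 + K) (A x) := by
    intro x
    have hop : (1 : X →L[ℝ] X) - K * K = (1 + K) * A := by
      rw [hKdef]; noncomm_ring
    have := congrArg (fun T : X →L[ℝ] X => T x) hop
    simpa using this
  -- A x ∈ Nk k for x ∈ Nk (k+1)
  have hAmem : ∀ k, ∀ x ∈ Nk (k + 1), A x ∈ Nk k := by
    intro k x hx
    simp only [hNk, LinearMap.mem_ker, ContinuousLinearMap.coe_coe] at hx ⊢
    rw [← ContinuousLinearMap.mul_apply, ← pow_succ]
    exact hx
  have hAmemR : ∀ k, ∀ x ∈ Rk k, A x ∈ Rk (k + 1) := by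
    rintro k x ⟨z, rfl⟩
    exact ⟨z, by rw [pow_succ']; rfl⟩
  -- ascent stabilizes
  have hasc : ∃ k, Nk (k + 1) ≤ Nk k := by
    by_contra hcon
    push_neg at hcon
    have hex : ∀ k, ∃ x, x ∈ Nk (k+1) ∧ ‖x‖ = 1 ∧ ∀ y ∈ Nk k, (1:ℝ)/2 ≤ ‖x - y‖ := by
      intro k
      obtain ⟨x, hx1, hx2⟩ := SetLike.not_le_iff_exists.1 (hcon k)
      exact riesz_between (Nk k) (Nk (k+1)) (hNmono k) (hNclosed k) ⟨x, hx1, hx2⟩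
    choose x hx1 hx2 hx3 using hex
    refine no_separated_seq (K * K) hK x (fun n => le_of_eq (hx2 n)) ?_
    intro m n hmn
    have hw : (1 + K) (A (x n)) + (K * K) (x m) ∈ Nk n := by
      refine Submodule.add_mem _ ?_ ?_
      · exact hkerinv n (1 + K) hA1K _ (hAmem n (x n) (hx1 n))
      · exact hNle (m+1) n hmn (hkerinv (m+1) (K*K) hAKK _ (hx1 m))
    have he : (K * K) (x n) - (K * K) (x m) = x n - ((1 + K) (A (x n)) + (K * K) (x m)) := by
      rw [← hid (x n)]; abel
    rw [he]
    exact hx3 n _ hw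
  -- descent stabilizes
  have hdesc : ∃ k, Rk k ≤ Rk (k + 1) := by
    by_contra hcon
    push_neg at hcon
    have hex : ∀ k, ∃ x, x ∈ Rk k ∧ ‖x‖ = 1 ∧ ∀ y ∈ Rk (k+1), (1:ℝ)/2 ≤ ‖x - y‖ := by
      intro k
      obtain ⟨x, hx1, hx2⟩ := SetLike.not_le_iff_exists.1 (hcon k)
      exact riesz_between (Rk (k+1)) (Rk k) (hRanti k) (hsemi (k+1)).2 ⟨x, hx1, hx2⟩
    choose x hx1 hx2 hx3 using hex
    refine no_separated_seq (K * K) hK x (fun n => le_of_eq (hx2 n)) ?_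
    intro m n hmn
    rw [norm_sub_rev]
    have hw : (1 + K) (A (x m)) + (K * K) (x n) ∈ Rk (m + 1) := by
      refine Submodule.add_mem _ ?_ ?_
      · exact hrangeinv (m+1) (1 + K) hA1K _ (hAmemR m (x m) (hx1 m))
      · exact hRle (m+1) n hmn (hrangeinv n (K*K) hAKK _ (hx1 n))
    have he : (K * K) (x m) - (K * K) (x n) = x m - ((1 + K) (A (x m)) + (K * K) (x n)) := by
      rw [← hid (x m)]; abel
    rw [he]
    exact hx3 m _ hw
  obtain ⟨k₁, hk₁⟩ := hasc
  obtain ⟨k₂, hk₂⟩ := hdesc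
  -- stabilization propagates
  have hNstep : ∀ k, Nk (k + 1) ≤ Nk k → Nk (k + 2) ≤ Nk (k + 1) := by
    intro k hk x hx
    have h1 : A x ∈ Nk (k + 1) := hAmem (k+1) x hx
    have h2 : A x ∈ Nk k := hk h1
    simp only [hNk, LinearMap.mem_ker, ContinuousLinearMap.coe_coe] at h2 ⊢
    rw [pow_succ, ContinuousLinearMap.mul_apply]
    exact h2
  have hRstep : ∀ k, Rk k ≤ Rk (k + 1) → Rk (k + 1) ≤ Rk (k + 2) := by
    rintro k hk y ⟨z, rfl⟩
    have h1 : (A ^ k) z ∈ Rk k := ⟨z, rfl⟩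
    obtain ⟨w, hw⟩ := hk h1
    refine ⟨w, ?_⟩
    have e1 : (A ^ (k+2)) w = A ((A ^ (k+1)) w) := by rw [pow_succ']; rfl
    have e2 : (A ^ (k+1)) z = A ((A ^ k) z) := by rw [pow_succ']; rfl
    simp only [ContinuousLinearMap.coe_coe] at hw ⊢
    rw [e1, hw, ← e2]
  -- constant tails
  have hNaux : ∀ j, Nk (k₁ + j) = Nk k₁ ∧ Nk (k₁ + j + 1) ≤ Nk (k₁ + j) := by
    intro j
    induction j with
    | zero => exact ⟨rfl, hk₁⟩
    | succ j ih =>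
      have hstep := hNstep (k₁ + j) ih.2
      have heq : Nk (k₁ + j + 1) = Nk (k₁ + j) := le_antisymm ih.2 (hNmono _)
      exact ⟨heq.trans ih.1, hstep⟩
  have hRaux : ∀ j, Rk (k₂ + j) = Rk k₂ ∧ Rk (k₂ + j) ≤ Rk (k₂ + j + 1) := by
    intro j
    induction j with
    | zero => exact ⟨rfl, hk₂⟩
    | succ j ih =>
      have heq : Rk (k₂ + j + 1) = Rk (k₂ + j) := le_antisymm (hRanti _) ih.2
      exact ⟨heq.trans ih.1, hRstep _ ih.2⟩
  have hNconst : ∀ m, k₁ ≤ m → Nk m = Nk k₁ := by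
    intro m hm
    obtain ⟨j, rfl⟩ := Nat.exists_eq_add_of_le hm
    exact (hNaux j).1
  have hRconst : ∀ m, k₂ ≤ m → Rk m = Rk k₂ := by
    intro m hm
    obtain ⟨j, rfl⟩ := Nat.exists_eq_add_of_le hm
    exact (hRaux j).1
  set p : ℕ := k₁ + k₂ + 1 with hpdef
  have hp1 : 1 ≤ p := by omega
  have hNp : ∀ m, p ≤ m → Nk m = Nk p := fun m hm =>
    (hNconst m (by omega)).trans (hNconst p (by omega)).symm
  have hRp : ∀ m, p ≤ m → Rk m = Rk p := fun m hm =>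
    (hRconst m (by omega)).trans (hRconst p (by omega)).symm
  -- direct sum decomposition
  have hdisj : ∀ x, x ∈ Nk p → x ∈ Rk p → x = 0 := by
    rintro x hxN ⟨y, rfl⟩
    have h2p : (A ^ (p + p)) y = 0 := by
      rw [pow_add, ContinuousLinearMap.mul_apply]
      exact LinearMap.mem_ker.1 hxN
    have hy : y ∈ Nk (p + p) := LinearMap.mem_ker.2 h2p
    rw [hNp (p + p) (by omega)] at hy
    exact LinearMap.mem_ker.1 hy
  have hsum : ∀ x : X, ∃ n ∈ Nk p, ∃ y : X, x = n + (A ^ p) y := by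
    intro x
    have hx : (A ^ p) x ∈ Rk (p + p) := by
      rw [hRp (p + p) (by omega)]
      exact ⟨x, rfl⟩
    obtain ⟨y, hy⟩ := hx
    refine ⟨x - (A ^ p) y, ?_, y, by abel⟩
    refine LinearMap.mem_ker.2 ?_
    rw [map_sub]
    have hpp : (A ^ p) ((A ^ p) y) = (A ^ (p + p)) y := by
      rw [show A ^ (p + p) = A ^ p * A ^ p from pow_add A p p]; rfl
    simp only [ContinuousLinearMap.coe_coe] at hy ⊢
    rw [hpp, hy, sub_self]
  -- identify kernel and range of A with the chain at level 1
  have hker_eq : LinearMap.ker (A : X →ₗ[ℝ] X) = Nk 1 := by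
    rw [hNk]; simp [pow_one]
  have hrange_eq : LinearMap.range (A : X →ₗ[ℝ] X) = Rk 1 := by
    rw [hRk]; simp [pow_one]
  have hkerN : LinearMap.ker (A : X →ₗ[ℝ] X) ≤ Nk p := le_trans (le_of_eq hker_eq) (hNle 1 p hp1)
  have hRrange : Rk p ≤ LinearMap.range (A : X →ₗ[ℝ] X) := le_trans (hRle 1 p hp1) (le_of_eq hrange_eq.symm)
  have hAN : ∀ x ∈ Nk p, A x ∈ Nk p := hkerinv p A (Commute.refl A)
  haveI hNfd : FiniteDimensional ℝ (Nk p) := (hsemi p).1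
  -- the quotient map restricted to N
  set f : (Nk p) →ₗ[ℝ] X ⧸ LinearMap.range (A : X →ₗ[ℝ] X) :=
    (LinearMap.range (A : X →ₗ[ℝ] X)).mkQ.comp (Nk p).subtype with hfdef
  have hfsurj : Function.Surjective ⇑f := by
    intro z
    obtain ⟨x, rfl⟩ := (LinearMap.range (A : X →ₗ[ℝ] X)).mkQ_surjective z
    obtain ⟨n, hn, y, hxy⟩ := hsum x
    refine ⟨⟨n, hn⟩, ?_⟩
    show (LinearMap.range (A : X →ₗ[ℝ] X)).mkQ n = (LinearMap.range (A : X →ₗ[ℝ] X)).mkQ x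
    rw [Submodule.mkQ_apply, Submodule.mkQ_apply]
    refine (Submodule.Quotient.eq _).2 ?_
    have : n - x = -((A ^ p) y) := by rw [hxy]; abel
    rw [this]
    exact Submodule.neg_mem _ (hRrange ⟨y, rfl⟩)
  have e1 : ((Nk p) ⧸ LinearMap.ker f) ≃ₗ[ℝ] X ⧸ LinearMap.range (A : X →ₗ[ℝ] X) :=
    f.quotKerEquivOfSurjective hfsurj
  -- restriction of A to N
  have hAN' : ∀ x ∈ Nk p, (A : X →ₗ[ℝ] X) x ∈ Nk p := fun x hx => hAN x hx
  set g : (Nk p) →ₗ[ℝ] (Nk p) := (A : X →ₗ[ℝ] X).restrict hAN' with hgdef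
  have hgf : LinearMap.range g = LinearMap.ker f := by
    ext x
    simp only [LinearMap.mem_range, LinearMap.mem_ker]
    constructor
    · rintro ⟨y, rfl⟩
      show (LinearMap.range (A : X →ₗ[ℝ] X)).mkQ ((g y : X)) = 0
      rw [Submodule.mkQ_apply, Submodule.Quotient.mk_eq_zero]
      have : ((g y : X)) = A (y : X) := by rw [hgdef, LinearMap.restrict_apply]; rfl
      rw [this]
      exact ⟨(y : X), rfl⟩
    · intro hx
      have hx' : (x : X) ∈ LinearMap.range (A : X →ₗ[ℝ] X) := by
        have : (LinearMap.range (A : X →ₗ[ℝ] X)).mkQ (x : X) = 0 := hx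
        rwa [Submodule.mkQ_apply, Submodule.Quotient.mk_eq_zero] at this
      obtain ⟨z, hz⟩ := hx'
      obtain ⟨n, hn, y, hzy⟩ := hsum z
      have hAz : A z = A n + A ((A ^ p) y) := by rw [hzy, map_add]
      have hApy : A ((A ^ p) y) ∈ Rk p := by
        have h1 : A ((A ^ p) y) = (A ^ (p+1)) y := by
          rw [show A ^ (p + 1) = A * A ^ p from pow_succ' A p]; rfl
        rw [h1, ← hRp (p+1) (by omega)]
        exact ⟨y, rfl⟩
      have hdiff : (x : X) - A n ∈ Nk p := Submodule.sub_mem _ x.2 (hAN n hn)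
      have hdiffR : (x : X) - A n ∈ Rk p := by
        have : (x : X) - A n = A ((A ^ p) y) := by rw [← (show A z = x from hz), hAz]; abel
        rw [this]; exact hApy
      have hxan : (x : X) = A n := sub_eq_zero.1 (hdisj _ hdiff hdiffR)
      exact ⟨⟨n, hn⟩, Subtype.ext (by rw [hgdef, LinearMap.restrict_apply]; exact hxan.symm)⟩
  -- kernel of g is isomorphic to the kernel of A
  have hkg : LinearMap.ker g = (LinearMap.ker (A : X →ₗ[ℝ] X)).comap (Nk p).subtype := by
    ext x
    simp only [LinearMap.mem_ker, Submodule.mem_comap, Submodule.subtype_apply, ContinuousLinearMap.coe_coe]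
    rw [Subtype.ext_iff]
    have : ((g x : X)) = A (x : X) := by rw [hgdef, LinearMap.restrict_apply]; rfl
    rw [show ((0 : Nk p) : X) = 0 from rfl] at *
    constructor
    · intro h; rw [← this]; exact_mod_cast h
    · intro h; exact_mod_cast this.trans h
  have hkerrank : Module.finrank ℝ (LinearMap.ker (A : X →ₗ[ℝ] X)) = Module.finrank ℝ (LinearMap.ker g) := by
    rw [hkg]
    exact (Submodule.comapSubtypeEquivOfLe hkerN).finrank_eq.symm
  -- put the numbers together
  have hrn := LinearMap.finrank_range_add_finrank_ker g
  have hq := Submodule.finrank_quotient_add_finrank (LinearMap.ker f)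
  have he1 : Module.finrank ℝ (X ⧸ LinearMap.range (A : X →ₗ[ℝ] X))
      = Module.finrank ℝ ((Nk p) ⧸ LinearMap.ker f) := e1.symm.finrank_eq
  have he2 : Module.finrank ℝ (LinearMap.range g) = Module.finrank ℝ (LinearMap.ker f) := by
    rw [hgf]
  refine ⟨hker_eq ▸ (hsemi 1).1, hrange_eq ▸ (hsemi 1).2, ?_, ?_⟩
  · exact Module.Finite.equiv e1
  · rw [hkerrank, he1]
    omega

lemma FredholmIndexZero.unit_mul (U B : X →L[ℝ] X) (hU : IsUnit U)
    (h : FredholmIndexZero B) : FredholmIndexZero (U * B) := by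
  obtain ⟨u, hu⟩ := hU
  set e : X ≃L[ℝ] X := ContinuousLinearEquiv.ofUnit u with he
  have hcoe : ∀ x : X, e x = U x := fun x => by rw [he, ← hu]; rfl
  have happ : ∀ x : X, (U * B) x = e (B x) := fun x => by
    rw [hcoe]; rfl
  obtain ⟨h1, h2, h3, h4⟩ := h
  have hker : LinearMap.ker (((U * B) : X →L[ℝ] X) : X →ₗ[ℝ] X) = LinearMap.ker (B : X →ₗ[ℝ] X) := by
    ext x
    simp only [LinearMap.mem_ker, ContinuousLinearMap.coe_coe]
    rw [happ x]
    constructor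
    · intro hh
      have := e.injective (by rw [hh, map_zero] : e (B x) = e 0)
      exact this
    · intro hh; rw [hh, map_zero]
  have hmap : Submodule.map (e.toLinearEquiv : X →ₗ[ℝ] X) (LinearMap.range (B : X →ₗ[ℝ] X))
      = LinearMap.range (((U * B) : X →L[ℝ] X) : X →ₗ[ℝ] X) := by
    ext y
    simp only [Submodule.mem_map, LinearMap.mem_range]
    constructor
    · rintro ⟨x, ⟨z, rfl⟩, rfl⟩
      exact ⟨z, happ z⟩
    · rintro ⟨z, rfl⟩
      exact ⟨B z, ⟨z, rfl⟩, (happ z).symm⟩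

  have hrangeset : (LinearMap.range (((U * B) : X →L[ℝ] X) : X →ₗ[ℝ] X) : Set X) = ⇑e '' (LinearMap.range (B : X →ₗ[ℝ] X) : Set X) := by
    ext y
    constructor
    · rintro ⟨z, rfl⟩
      exact ⟨B z, ⟨z, rfl⟩, (happ z).symm⟩
    · rintro ⟨x, ⟨z, rfl⟩, rfl⟩
      exact ⟨z, happ z⟩
  have hclosed : IsClosed (LinearMap.range (((U * B) : X →L[ℝ] X) : X →ₗ[ℝ] X) : Set X) := by
    rw [hrangeset]
    exact (e.toHomeomorph.isClosedMap) _ h2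
  have equiv : (X ⧸ LinearMap.range (B : X →ₗ[ℝ] X)) ≃ₗ[ℝ] X ⧸ LinearMap.range (((U * B) : X →L[ℝ] X) : X →ₗ[ℝ] X) :=
    Submodule.Quotient.equiv _ _ e.toLinearEquiv hmap
  refine ⟨hker ▸ h1, hclosed, Module.Finite.equiv equiv, ?_⟩
  rw [show Module.finrank ℝ (LinearMap.ker (((U * B) : X →L[ℝ] X) : X →ₗ[ℝ] X)) = Module.finrank ℝ (LinearMap.ker (B : X →ₗ[ℝ] X)) from by rw [hker]]
  rw [h4]
  exact equiv.finrank_eq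


end RieszTheory

theorem stmt_2 {X : Type*} [NormedAddCommGroup X] [NormedSpace ℝ X] [CompleteSpace X]
    (C D : X →L[ℝ] X) (hC : IsUnit (1 - C))
    (hD2 : IsCompactOperator (⇑(D * D))) (hDC : IsCompactOperator (⇑(D * C))) :
    FredholmIndexZero (1 - C - D) := by
  obtain ⟨u, hu⟩ := id hC
  set V : X →L[ℝ] X := ↑u⁻¹ with hV
  have hUV : (1 - C) * V = 1 := by rw [← hu, hV]; exact u.mul_inv
  set T : X →L[ℝ] X := V * D with hT
  have hfact : 1 - C - D = (1 - C) * (1 - T) := by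
    rw [hT, mul_sub, mul_one, ← mul_assoc, hUV, one_mul]
  have hVid : V = 1 + C * V := by
    have h1 : V - C * V = 1 := by
      have h0 : (1 - C) * V = V - C * V := by noncomm_ring
      rw [← h0, hUV]
    rw [← h1]; noncomm_ring
  have hDV : D * V = D + (D * C) * V := by
    conv_lhs => rw [hVid]
    noncomm_ring
  have hTT : T * T = V * (D * D + (D * C) * (V * D)) := by
    have h1 : T * T = V * ((D * V) * D) := by rw [hT]; noncomm_ring
    rw [h1, hDV]; noncomm_ring
  have hcomp : IsCompactOperator ⇑(T * T) := by
    rw [hTT]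
    have hsum : IsCompactOperator ⇑(D * D + (D * C) * (V * D)) := by
      have h2 : ⇑(D * D + (D * C) * (V * D)) = ⇑(D * D) + ⇑(D * C) ∘ ⇑(V * D) := rfl
      rw [h2]
      exact hD2.add (hDC.comp_clm (V * D))
    have h3 : ⇑(V * (D * D + (D * C) * (V * D))) = ⇑V ∘ ⇑(D * D + (D * C) * (V * D)) := rfl
    rw [h3]
    exact hsum.clm_comp V
  have hmain : FredholmIndexZero (1 - T) := by
    apply fredholmIndexZero'_of_sq_compact
    rw [show (1 : X →L[ℝ] X) - (1 - T) = T from sub_sub_cancel 1 T]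
    exact hcomp
  rw [hfact]
  exact FredholmIndexZero.unit_mul (1 - C) (1 - T) hC hmain
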